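/- Let s ∈ (0,1), n ≥ 1, Ω ⊂ ℝⁿ a bounded domain, and let E = {E₋₁, E₀, E₁} be admissible. Let A ⊆ (E₁ ∪ E₋₁) ∩ Ω be measurable and define Ẽ₋₁ = E₋₁ ∩ Aᶜ, Ẽ₁ = E₁ ∩ Aᶜ, Ẽ₀ = E₀ ∪ A. If F^s(E, Ω) < ∞ and F^s(Ẽ, Ω) < ∞, then all the L^s-terms below are finite and F^s(E, Ω) − F^s(Ẽ, Ω) = σ_{−1,0}[L^s(E₋₁∩A, E₋₁ᶜ) − L^s(E₋₁∩A, E₋₁∩Aᶜ)] + σ_{0,1}[L^s(E₁∩A, E₁ᶜ) − L^s(E₁∩A, E₁∩Aᶜ)] − 2α₀[L^s(E₋₁∩A, E₁∩A) + L^s(E₋₁∩A, E₁∩Aᶜ) + L^s(E₁∩A, E₋₁∩Aᶜ)]. -/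

import Mathlib

open MeasureTheory Filter ENNReal

/-- The nonlocal interaction `L^s(A,B) = ∫_A ∫_B |x-y|^{-(n+s)} dy dx ∈ [0,∞]`. -/
noncomputable def Ls (n : ℕ) (s : ℝ) (A B : Set (EuclideanSpace ℝ (Fin n))) : ℝ≥0∞ :=
  ∫⁻ x in A, ∫⁻ y in B, ENNReal.ofReal (1 / ‖x - y‖ ^ ((n : ℝ) + s))

/-- The nonlocal area `Per^s_Ω(A,B)`. -/
noncomputable def nlArea (n : ℕ) (s : ℝ) (Ω A B : Set (EuclideanSpace ℝ (Fin n))) : ℝ≥0∞ :=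
  Ls n s (A ∩ Ω) (B ∩ Ω) + Ls n s (A ∩ Ω) (B ∩ Ωᶜ) + Ls n s (A ∩ Ωᶜ) (B ∩ Ω)

/-- The fractional `s`-perimeter `Per^s_Ω(E) = Per^s_Ω(E, Eᶜ)`. -/
noncomputable def nlPer (n : ℕ) (s : ℝ) (Ω E : Set (EuclideanSpace ℝ (Fin n))) : ℝ≥0∞ :=
  nlArea n s Ω E Eᶜ

/-- An admissible triple (3-part partition of `ℝⁿ` up to null sets);
`Em`, `E0`, `E1` stand for `E₋₁`, `E₀`, `E₁`. -/
def Admissible (n : ℕ) (Em E0 E1 : Set (EuclideanSpace ℝ (Fin n))) : Prop :=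
  MeasurableSet Em ∧ MeasurableSet E0 ∧ MeasurableSet E1 ∧
  volume ((Em ∪ E0 ∪ E1)ᶜ) = 0 ∧
  volume (Em ∩ E0) = 0 ∧ volume (Em ∩ E1) = 0 ∧ volume (E0 ∩ E1) = 0

/-- The weighted nonlocal energy
`F^s(E,Ω) = σ_{-1,0} Per^s_Ω(E₋₁,E₀) + σ_{0,1} Per^s_Ω(E₀,E₁) + σ_{-1,1} Per^s_Ω(E₋₁,E₁)`. -/
noncomputable def Fs (n : ℕ) (s σm0 σ01 σm1 : ℝ)
    (Ω Em E0 E1 : Set (EuclideanSpace ℝ (Fin n))) : ℝ≥0∞ :=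
  ENNReal.ofReal σm0 * nlArea n s Ω Em E0 + ENNReal.ofReal σ01 * nlArea n s Ω E0 E1 +
    ENNReal.ofReal σm1 * nlArea n s Ω Em E1

lemma kmeas (n : ℕ) (s : ℝ) :
    Measurable (Function.uncurry fun x y : EuclideanSpace ℝ (Fin n) =>
      ENNReal.ofReal (1 / ‖x - y‖ ^ ((n : ℝ) + s))) := by
  unfold Function.uncurry; fun_prop

lemma Ls_symm (n : ℕ) (s : ℝ) (A B : Set (EuclideanSpace ℝ (Fin n))) :
    Ls n s A B = Ls n s B A := by
  rw [Ls, Ls, lintegral_lintegral_swap (kmeas n s).aemeasurable]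
  refine lintegral_congr fun y => lintegral_congr fun x => ?_
  rw [norm_sub_rev]

lemma Ls_add_left {n : ℕ} {s : ℝ} {X Y Z : Set (EuclideanSpace ℝ (Fin n))}
    (h : volume (X ∩ Y) = 0) (hY : NullMeasurableSet Y) :
    Ls n s (X ∪ Y) Z = Ls n s X Z + Ls n s Y Z := by
  rw [Ls, Ls, Ls, Measure.restrict_union₀ h hY, lintegral_add_measure]

lemma Ls_add_right {n : ℕ} {s : ℝ} {X Y Z : Set (EuclideanSpace ℝ (Fin n))}
    (h : volume (X ∩ Y) = 0) (hY : NullMeasurableSet Y) :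
    Ls n s Z (X ∪ Y) = Ls n s Z X + Ls n s Z Y := by
  rw [Ls, Ls, Ls, ← lintegral_add_left ((kmeas n s).lintegral_prod_right)]
  refine lintegral_congr fun x => ?_
  rw [Measure.restrict_union₀ h hY, lintegral_add_measure]

lemma Ls_congr_right {n : ℕ} {s : ℝ} {X Y Z : Set (EuclideanSpace ℝ (Fin n))}
    (h : Y =ᵐ[volume] Z) : Ls n s X Y = Ls n s X Z := by
  rw [Ls, Ls]
  refine lintegral_congr fun x => ?_
  rw [Measure.restrict_congr_set h]

lemma toReal_comb {a b c : ℝ} (ha : 0 ≤ a) (hb : 0 ≤ b) (hc : 0 ≤ c)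
    {u v w : ℝ≥0∞} (hu : u ≠ ⊤) (hv : v ≠ ⊤) (hw : w ≠ ⊤) :
    (ENNReal.ofReal a * u + ENNReal.ofReal b * v + ENNReal.ofReal c * w).toReal
      = a * u.toReal + b * v.toReal + c * w.toReal := by
  rw [ENNReal.toReal_add (ENNReal.add_ne_top.mpr
        ⟨ENNReal.mul_ne_top ENNReal.ofReal_ne_top hu, ENNReal.mul_ne_top ENNReal.ofReal_ne_top hv⟩)
      (ENNReal.mul_ne_top ENNReal.ofReal_ne_top hw),
    ENNReal.toReal_add (ENNReal.mul_ne_top ENNReal.ofReal_ne_top hu)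
      (ENNReal.mul_ne_top ENNReal.ofReal_ne_top hv),
    ENNReal.toReal_mul, ENNReal.toReal_mul, ENNReal.toReal_mul,
    ENNReal.toReal_ofReal ha, ENNReal.toReal_ofReal hb, ENNReal.toReal_ofReal hc]

theorem energy_difference_two_sided_strip
    (n : ℕ) (hn : 1 ≤ n) (s : ℝ) (hs : s ∈ Set.Ioo (0 : ℝ) 1)
    (Ω : Set (EuclideanSpace ℝ (Fin n))) (hΩo : IsOpen Ω) (hΩconn : IsConnected Ω)
    (hΩb : Bornology.IsBounded Ω)
    (σm0 σ01 σm1 : ℝ) (hσm0 : 0 < σm0) (hσ01 : 0 < σ01) (hσm1 : 0 < σm1)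
    (Em E0 E1 : Set (EuclideanSpace ℝ (Fin n))) (hadm : Admissible n Em E0 E1)
    (A : Set (EuclideanSpace ℝ (Fin n))) (hA : MeasurableSet A)
    (hAsub : A ⊆ (E1 ∪ Em) ∩ Ω)
    (hfin : Fs n s σm0 σ01 σm1 Ω Em E0 E1 ≠ ⊤)
    (hfin' : Fs n s σm0 σ01 σm1 Ω (Em ∩ Aᶜ) (E0 ∪ A) (E1 ∩ Aᶜ) ≠ ⊤) :
    Ls n s (Em ∩ A) Emᶜ ≠ ⊤ ∧ Ls n s (Em ∩ A) (Em ∩ Aᶜ) ≠ ⊤ ∧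
    Ls n s (E1 ∩ A) E1ᶜ ≠ ⊤ ∧ Ls n s (E1 ∩ A) (E1 ∩ Aᶜ) ≠ ⊤ ∧
    Ls n s (Em ∩ A) (E1 ∩ A) ≠ ⊤ ∧ Ls n s (Em ∩ A) (E1 ∩ Aᶜ) ≠ ⊤ ∧
    Ls n s (E1 ∩ A) (Em ∩ Aᶜ) ≠ ⊤ ∧
    (Fs n s σm0 σ01 σm1 Ω Em E0 E1).toReal -
        (Fs n s σm0 σ01 σm1 Ω (Em ∩ Aᶜ) (E0 ∪ A) (E1 ∩ Aᶜ)).toReal =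
      σm0 * ((Ls n s (Em ∩ A) Emᶜ).toReal - (Ls n s (Em ∩ A) (Em ∩ Aᶜ)).toReal) +
        σ01 * ((Ls n s (E1 ∩ A) E1ᶜ).toReal - (Ls n s (E1 ∩ A) (E1 ∩ Aᶜ)).toReal) -
        2 * ((σm0 + σ01 - σm1) / 2) *
          ((Ls n s (Em ∩ A) (E1 ∩ A)).toReal + (Ls n s (Em ∩ A) (E1 ∩ Aᶜ)).toReal +
            (Ls n s (E1 ∩ A) (Em ∩ Aᶜ)).toReal) := by
  obtain ⟨hEm, hE0, hE1, hcov, hm0, hm1, h01⟩ := hadm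
  have hΩm : MeasurableSet Ω := hΩo.measurableSet
  set P := Em ∩ A with hPdef
  set Q := E1 ∩ A with hQdef
  set M := Em ∩ Aᶜ with hMdef
  set O := E1 ∩ Aᶜ with hOdef
  have hAΩ : A ⊆ Ω := fun x hx => (hAsub hx).2
  -- separation helper
  have hsep : ∀ {S X Y : Set (EuclideanSpace ℝ (Fin n))}, X ⊆ S → Y ⊆ Sᶜ →
      volume (X ∩ Y) = 0 := by
    intro S X Y h1 h2
    have he : X ∩ Y = ∅ := by
      ext x
      simp only [Set.mem_inter_iff, Set.mem_empty_iff_false, iff_false, not_and]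
      exact fun hx hy => (h2 hy (h1 hx)).elim
    simp [he]
  -- basic measurability
  have hPm : MeasurableSet P := hEm.inter hA
  have hQm : MeasurableSet Q := hE1.inter hA
  have hMm : MeasurableSet M := hEm.inter hA.compl
  have hOm : MeasurableSet O := hE1.inter hA.compl
  -- null facts
  have dPMi : volume (P ∩ (M ∩ Ω)) = 0 :=
    hsep (S := A) Set.inter_subset_right (fun x hx => hx.1.2)
  have dPM : volume (P ∩ M) = 0 :=
    hsep (S := A) Set.inter_subset_right Set.inter_subset_right
  have dQOi : volume (Q ∩ (O ∩ Ω)) = 0 :=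
    hsep (S := A) Set.inter_subset_right (fun x hx => hx.1.2)
  have dQO : volume (Q ∩ O) = 0 :=
    hsep (S := A) Set.inter_subset_right Set.inter_subset_right
  have dPQ : volume (P ∩ Q) = 0 :=
    measure_mono_null (fun x hx => (⟨hx.1.1, hx.2.1⟩ : x ∈ Em ∩ E1)) hm1
  have dZiPQ : volume ((E0 ∩ Ω) ∩ (P ∪ Q)) = 0 := by
    rw [Set.inter_union_distrib_left]
    exact measure_union_null
      (measure_mono_null (fun x hx => (⟨hx.2.1, hx.1.1⟩ : x ∈ Em ∩ E0)) hm0)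
      (measure_mono_null (fun x hx => (⟨hx.1.1, hx.2.1⟩ : x ∈ E0 ∩ E1)) h01)
  have dZQO : volume (E0 ∩ (Q ∪ O)) = 0 := by
    rw [Set.inter_union_distrib_left]
    exact measure_union_null
      (measure_mono_null (fun x hx => (⟨hx.1, hx.2.1⟩ : x ∈ E0 ∩ E1)) h01)
      (measure_mono_null (fun x hx => (⟨hx.1, hx.2.1⟩ : x ∈ E0 ∩ E1)) h01)
  have dZPM : volume (E0 ∩ (P ∪ M)) = 0 := by
    rw [Set.inter_union_distrib_left]
    exact measure_union_null
      (measure_mono_null (fun x hx => (⟨hx.2.1, hx.1⟩ : x ∈ Em ∩ E0)) hm0)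
      (measure_mono_null (fun x hx => (⟨hx.2.1, hx.1⟩ : x ∈ Em ∩ E0)) hm0)
  -- splitting along Ω (inner and outer)
  have splitR : ∀ (X Y : Set (EuclideanSpace ℝ (Fin n))), MeasurableSet Y →
      Ls n s X Y = Ls n s X (Y ∩ Ω) + Ls n s X (Y ∩ Ωᶜ) := by
    intro X Y hY
    nth_rewrite 1 [← Set.inter_union_compl Y Ω]
    exact Ls_add_right (hsep (S := Ω) Set.inter_subset_right Set.inter_subset_right)
      (hY.inter hΩm.compl).nullMeasurableSet
  have splitL : ∀ (X Y : Set (EuclideanSpace ℝ (Fin n))), MeasurableSet X →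
      Ls n s X Y = Ls n s (X ∩ Ω) Y + Ls n s (X ∩ Ωᶜ) Y := by
    intro X Y hX
    nth_rewrite 1 [← Set.inter_union_compl X Ω]
    exact Ls_add_left (hsep (S := Ω) Set.inter_subset_right Set.inter_subset_right)
      (hX.inter hΩm.compl).nullMeasurableSet
  -- exact set identities
  have sEmΩ : Em ∩ Ω = P ∪ M ∩ Ω := by
    ext x
    constructor
    · rintro ⟨h1, h2⟩
      by_cases hx : x ∈ A
      · exact Or.inl ⟨h1, hx⟩
      · exact Or.inr ⟨⟨h1, hx⟩, h2⟩
    · rintro (⟨h1, h2⟩ | ⟨⟨h1, _⟩, h2⟩)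
      · exact ⟨h1, hAΩ h2⟩
      · exact ⟨h1, h2⟩
  have sEmΩc : Em ∩ Ωᶜ = M ∩ Ωᶜ := by
    ext x
    constructor
    · rintro ⟨h1, h2⟩
      exact ⟨⟨h1, fun hx => h2 (hAΩ hx)⟩, h2⟩
    · rintro ⟨⟨h1, _⟩, h2⟩
      exact ⟨h1, h2⟩
  have sE1Ω : E1 ∩ Ω = Q ∪ O ∩ Ω := by
    ext x
    constructor
    · rintro ⟨h1, h2⟩
      by_cases hx : x ∈ A
      · exact Or.inl ⟨h1, hx⟩
      · exact Or.inr ⟨⟨h1, hx⟩, h2⟩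
    · rintro (⟨h1, h2⟩ | ⟨⟨h1, _⟩, h2⟩)
      · exact ⟨h1, hAΩ h2⟩
      · exact ⟨h1, h2⟩
  have sE1Ωc : E1 ∩ Ωᶜ = O ∩ Ωᶜ := by
    ext x
    constructor
    · rintro ⟨h1, h2⟩
      exact ⟨⟨h1, fun hx => h2 (hAΩ hx)⟩, h2⟩
    · rintro ⟨⟨h1, _⟩, h2⟩
      exact ⟨h1, h2⟩
  have sT0Ω : (E0 ∪ A) ∩ Ω = E0 ∩ Ω ∪ (P ∪ Q) := by
    ext x
    constructor
    · rintro ⟨h1, h2⟩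
      rcases h1 with h1 | h1
      · exact Or.inl ⟨h1, h2⟩
      · exact (hAsub h1).1.elim (fun he => Or.inr (Or.inr ⟨he, h1⟩))
          (fun he => Or.inr (Or.inl ⟨he, h1⟩))
    · rintro (⟨h1, h2⟩ | (⟨h1, h2⟩ | ⟨h1, h2⟩))
      · exact ⟨Or.inl h1, h2⟩
      · exact ⟨Or.inr h2, hAΩ h2⟩
      · exact ⟨Or.inr h2, hAΩ h2⟩
  have sT0Ωc : (E0 ∪ A) ∩ Ωᶜ = E0 ∩ Ωᶜ := by
    ext x
    constructor
    · rintro ⟨h1, h2⟩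
      rcases h1 with h1 | h1
      · exact ⟨h1, h2⟩
      · exact (h2 (hAΩ h1)).elim
    · rintro ⟨h1, h2⟩
      exact ⟨Or.inl h1, h2⟩
  have sEmPM : Em = P ∪ M := (Set.inter_union_compl Em A).symm
  have sE1QO : E1 = Q ∪ O := (Set.inter_union_compl E1 A).symm
  -- a.e. identities for complements
  have aEmc : (Emᶜ : Set (EuclideanSpace ℝ (Fin n))) =ᵐ[volume] ((E0 ∪ E1 : Set (EuclideanSpace ℝ (Fin n)))) := by
    rw [MeasureTheory.ae_eq_set]
    constructor
    · refine measure_mono_null (fun x hx => ?_) hcov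
      refine Set.mem_compl fun h => ?_
      rcases h with (h | h) | h
      · exact Set.notMem_of_mem_compl hx.1 h
      · exact hx.2 (Or.inl h)
      · exact hx.2 (Or.inr h)
    · refine measure_mono_null (fun x hx => ?_) (measure_union_null hm0 hm1)
      have hxm : x ∈ Em := Set.not_notMem.mp hx.2
      exact hx.1.elim (fun h => Or.inl ⟨hxm, h⟩) (fun h => Or.inr ⟨hxm, h⟩)
  have aE1c : (E1ᶜ : Set (EuclideanSpace ℝ (Fin n))) =ᵐ[volume] ((E0 ∪ Em : Set (EuclideanSpace ℝ (Fin n)))) := by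
    rw [MeasureTheory.ae_eq_set]
    constructor
    · refine measure_mono_null (fun x hx => ?_) hcov
      refine Set.mem_compl fun h => ?_
      rcases h with (h | h) | h
      · exact hx.2 (Or.inr h)
      · exact hx.2 (Or.inl h)
      · exact Set.notMem_of_mem_compl hx.1 h
    · refine measure_mono_null (fun x hx => ?_) (measure_union_null h01 hm1)
      have hx1 : x ∈ E1 := Set.not_notMem.mp hx.2
      exact hx.1.elim (fun h => Or.inl ⟨h, hx1⟩) (fun h => Or.inr ⟨h, hx1⟩)
  -- the six decomposition identities
  have nMi : NullMeasurableSet (M ∩ Ω) := (hMm.inter hΩm).nullMeasurableSet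
  have nOi : NullMeasurableSet (O ∩ Ω) := (hOm.inter hΩm).nullMeasurableSet
  have nPQ : NullMeasurableSet (P ∪ Q) := (hPm.union hQm).nullMeasurableSet
  have nQ : NullMeasurableSet Q := hQm.nullMeasurableSet
  have nM : NullMeasurableSet M := hMm.nullMeasurableSet
  have nO : NullMeasurableSet O := hOm.nullMeasurableSet
  have eq1 : nlArea n s Ω Em E0 = Ls n s P E0 + nlArea n s Ω M E0 := by
    simp only [nlArea]
    rw [sEmΩ, sEmΩc, Ls_add_left dPMi nMi, Ls_add_left dPMi nMi, splitR P E0 hE0]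
    ring
  have eq2 : nlArea n s Ω E0 E1 = Ls n s E0 Q + nlArea n s Ω E0 O := by
    simp only [nlArea]
    rw [sE1Ω, sE1Ωc, Ls_add_right dQOi nOi, Ls_add_right dQOi nOi, splitL E0 Q hE0]
    ring
  have eq3 : nlArea n s Ω Em E1 =
      Ls n s P Q + Ls n s P O + Ls n s M Q + nlArea n s Ω M O := by
    simp only [nlArea]
    rw [sEmΩ, sEmΩc, sE1Ω, sE1Ωc, Ls_add_left dPMi nMi, Ls_add_left dPMi nMi,
      Ls_add_right dQOi nOi, Ls_add_right dQOi nOi, Ls_add_right dQOi nOi,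
      splitR P O hOm, splitL M Q hMm]
    ring
  have eq4 : nlArea n s Ω M (E0 ∪ A) =
      Ls n s M P + Ls n s M Q + nlArea n s Ω M E0 := by
    simp only [nlArea]
    rw [sT0Ω, sT0Ωc, Ls_add_right dZiPQ nPQ, Ls_add_right dZiPQ nPQ,
      Ls_add_right dPQ nQ, Ls_add_right dPQ nQ, splitL M P hMm, splitL M Q hMm]
    ring
  have eq5 : nlArea n s Ω (E0 ∪ A) O =
      Ls n s P O + Ls n s Q O + nlArea n s Ω E0 O := by
    simp only [nlArea]
    rw [sT0Ω, sT0Ωc, Ls_add_left dZiPQ nPQ, Ls_add_left dZiPQ nPQ,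
      Ls_add_left dPQ nQ, Ls_add_left dPQ nQ, splitR P O hOm, splitR Q O hOm]
    ring
  have eq7 : Ls n s P Emᶜ = Ls n s P E0 + Ls n s P Q + Ls n s P O := by
    rw [Ls_congr_right aEmc, Ls_add_right h01 hE1.nullMeasurableSet, sE1QO,
      Ls_add_right dQO nO]
    ring
  have eq8 : Ls n s Q E1ᶜ = Ls n s E0 Q + Ls n s P Q + Ls n s M Q := by
    have d0m : volume (E0 ∩ Em) = 0 :=
      measure_mono_null (fun x hx => (⟨hx.2, hx.1⟩ : x ∈ Em ∩ E0)) hm0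
    rw [Ls_congr_right aE1c, Ls_add_right d0m hEm.nullMeasurableSet, sEmPM,
      Ls_add_right dPM nM, Ls_symm n s Q E0, Ls_symm n s Q P, Ls_symm n s Q M]
    ring
  -- finiteness of the three nlArea terms in each energy
  have hσm0' : ENNReal.ofReal σm0 ≠ 0 := (ENNReal.ofReal_pos.mpr hσm0).ne'
  have hσ01' : ENNReal.ofReal σ01 ≠ 0 := (ENNReal.ofReal_pos.mpr hσ01).ne'
  have hσm1' : ENNReal.ofReal σm1 ≠ 0 := (ENNReal.ofReal_pos.mpr hσm1).ne'
  have extract : ∀ (a b c : ℝ≥0∞), ENNReal.ofReal σm0 * a + ENNReal.ofReal σ01 * b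
      + ENNReal.ofReal σm1 * c ≠ ⊤ → a ≠ ⊤ ∧ b ≠ ⊤ ∧ c ≠ ⊤ := by
    intro a b c h
    refine ⟨?_, ?_, ?_⟩
    · intro ht; apply h; rw [ht, ENNReal.mul_top hσm0']; simp
    · intro ht; apply h; rw [ht, ENNReal.mul_top hσ01']; simp
    · intro ht; apply h; rw [ht, ENNReal.mul_top hσm1']; simp
  rw [Fs] at hfin hfin'
  obtain ⟨hF1, hF2, hF3⟩ := extract _ _ _ hfin
  obtain ⟨hF1', hF2', hF3'⟩ := extract _ _ _ hfin'
  -- finiteness of all atomic terms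
  have h1 := eq1 ▸ hF1
  obtain ⟨hPZ, hMZ⟩ := ENNReal.add_ne_top.mp h1
  have h2 := eq2 ▸ hF2
  obtain ⟨hZQ, hZO⟩ := ENNReal.add_ne_top.mp h2
  have h3 := eq3 ▸ hF3
  obtain ⟨h3a, hMO⟩ := ENNReal.add_ne_top.mp h3
  obtain ⟨h3b, hMQ⟩ := ENNReal.add_ne_top.mp h3a
  obtain ⟨hPQ, hPO⟩ := ENNReal.add_ne_top.mp h3b
  have h4 := eq4 ▸ hF1'
  obtain ⟨h4a, _⟩ := ENNReal.add_ne_top.mp h4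
  obtain ⟨hMP, _⟩ := ENNReal.add_ne_top.mp h4a
  have h5 := eq5 ▸ hF2'
  obtain ⟨h5a, _⟩ := ENNReal.add_ne_top.mp h5
  obtain ⟨_, hQO⟩ := ENNReal.add_ne_top.mp h5a
  -- toReal versions of the two energies
  have tE : (ENNReal.ofReal σm0 * nlArea n s Ω Em E0 + ENNReal.ofReal σ01 * nlArea n s Ω E0 E1
      + ENNReal.ofReal σm1 * nlArea n s Ω Em E1).toReal
      = σm0 * ((Ls n s P E0).toReal + (nlArea n s Ω M E0).toReal)
        + σ01 * ((Ls n s E0 Q).toReal + (nlArea n s Ω E0 O).toReal)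
        + σm1 * ((Ls n s P Q).toReal + (Ls n s P O).toReal + (Ls n s M Q).toReal
            + (nlArea n s Ω M O).toReal) := by
    rw [toReal_comb hσm0.le hσ01.le hσm1.le hF1 hF2 hF3, eq1, eq2, eq3,
      ENNReal.toReal_add hPZ hMZ, ENNReal.toReal_add hZQ hZO,
      ENNReal.toReal_add h3a hMO, ENNReal.toReal_add h3b hMQ, ENNReal.toReal_add hPQ hPO]
  have tE' : (ENNReal.ofReal σm0 * nlArea n s Ω M (E0 ∪ A)
      + ENNReal.ofReal σ01 * nlArea n s Ω (E0 ∪ A) O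
      + ENNReal.ofReal σm1 * nlArea n s Ω M O).toReal
      = σm0 * ((Ls n s M P).toReal + (Ls n s M Q).toReal + (nlArea n s Ω M E0).toReal)
        + σ01 * ((Ls n s P O).toReal + (Ls n s Q O).toReal + (nlArea n s Ω E0 O).toReal)
        + σm1 * (nlArea n s Ω M O).toReal := by
    rw [toReal_comb hσm0.le hσ01.le hσm1.le hF1' hF2' hF3', eq4, eq5]
    have h4b := eq4 ▸ hF1'
    obtain ⟨h4c, h4d⟩ := ENNReal.add_ne_top.mp h4b
    obtain ⟨h4e, h4f⟩ := ENNReal.add_ne_top.mp h4c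
    have h5b := eq5 ▸ hF2'
    obtain ⟨h5c, h5d⟩ := ENNReal.add_ne_top.mp h5b
    obtain ⟨h5e, h5f⟩ := ENNReal.add_ne_top.mp h5c
    rw [ENNReal.toReal_add h4c h4d, ENNReal.toReal_add h4e h4f,
      ENNReal.toReal_add h5c h5d, ENNReal.toReal_add h5e h5f]
  have t7 : (Ls n s P Emᶜ).toReal
      = (Ls n s P E0).toReal + (Ls n s P Q).toReal + (Ls n s P O).toReal := by
    rw [eq7, ENNReal.toReal_add (ENNReal.add_ne_top.mpr ⟨hPZ, hPQ⟩) hPO,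
      ENNReal.toReal_add hPZ hPQ]
  have t8 : (Ls n s Q E1ᶜ).toReal
      = (Ls n s E0 Q).toReal + (Ls n s P Q).toReal + (Ls n s M Q).toReal := by
    rw [eq8, ENNReal.toReal_add (ENNReal.add_ne_top.mpr ⟨hZQ, hPQ⟩) hMQ,
      ENNReal.toReal_add hZQ hPQ]
  refine ⟨?_, ?_, ?_, hQO, hPQ, hPO, ?_, ?_⟩
  · rw [eq7]
    exact ENNReal.add_ne_top.mpr ⟨ENNReal.add_ne_top.mpr ⟨hPZ, hPQ⟩, hPO⟩
  · rw [Ls_symm n s P M]; exact hMP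
  · rw [eq8]
    exact ENNReal.add_ne_top.mpr ⟨ENNReal.add_ne_top.mpr ⟨hZQ, hPQ⟩, hMQ⟩
  · rw [Ls_symm n s Q M]; exact hMQ
  · rw [Fs, Fs, tE, tE', t7, t8, Ls_symm n s P M, Ls_symm n s Q M]
    ring
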